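/- arXiv:1711.07688 — 3 statements merged into one kernel-verified Lean document; each statement's English description precedes it below -/
import Mathlib

section
/- There exists a positive integer m such that for every nonzero nonnegative continuous function f : S → ℝ and every x ∈ S one has ((r+J)^m f)(x) > 0; the same conclusion holds with r+G in place of r+J. In particular, the positive operators r+J and r+G on C(S) are irreducible. -/
open MeasureTheory Filter Topology

/-- The operator (r+J) : f ↦ (x ↦ r(x)f(x) + ∫_S K(y,x)f(y)dy), acting on functions. -/
noncomputable def opJ {d : ℕ} (S : Set (EuclideanSpace ℝ (Fin d)))
    (r : EuclideanSpace ℝ (Fin d) → ℝ)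
    (K : EuclideanSpace ℝ (Fin d) → EuclideanSpace ℝ (Fin d) → ℝ)
    (f : EuclideanSpace ℝ (Fin d) → ℝ) : EuclideanSpace ℝ (Fin d) → ℝ :=
  fun x => r x * f x + ∫ y in S, K y x * f y

/-- The operator (r+G) : f ↦ (x ↦ r(x)f(x) + ∫_S K(x,y)f(y)dy), acting on functions. -/
noncomputable def opG {d : ℕ} (S : Set (EuclideanSpace ℝ (Fin d)))
    (r : EuclideanSpace ℝ (Fin d) → ℝ)
    (K : EuclideanSpace ℝ (Fin d) → EuclideanSpace ℝ (Fin d) → ℝ)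
    (f : EuclideanSpace ℝ (Fin d) → ℝ) : EuclideanSpace ℝ (Fin d) → ℝ :=
  fun x => r x * f x + ∫ y in S, K x y * f y


section Chain

open Metric



variable {E : Type*} [MetricSpace E]

/-- Points of `S` reachable from `p` by a chain of `≤ n` steps each of length `< ε`. -/
def chainSet (S : Set E) (ε : ℝ) (p : E) : ℕ → Set E
  | 0 => {p}
  | n+1 => {x | x ∈ S ∧ ∃ y ∈ chainSet S ε p n, dist x y < ε}

lemma chainSet_subset {S : Set E} {ε : ℝ} {p : E} (hp : p ∈ S) :
    ∀ n, chainSet S ε p n ⊆ S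
  | 0 => by intro x hx; rw [chainSet] at hx; simp at hx; subst hx; exact hp
  | n+1 => fun x hx => hx.1

lemma chainSet_succ_self {S : Set E} {ε : ℝ} (hε : 0 < ε) {p : E} (hp : p ∈ S) :
    ∀ n, chainSet S ε p n ⊆ chainSet S ε p (n+1)
  | 0 => by
      intro x hx
      rw [chainSet] at hx; simp at hx; subst hx
      refine ⟨hp, x, rfl, by simpa using hε⟩
  | n+1 => by
      rintro x ⟨hxS, y, hy, hd⟩
      exact ⟨hxS, y, chainSet_succ_self hε hp n hy, hd⟩

lemma chainSet_mono {S : Set E} {ε : ℝ} (hε : 0 < ε) {p : E} (hp : p ∈ S)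
    {n m : ℕ} (h : n ≤ m) : chainSet S ε p n ⊆ chainSet S ε p m := by
  induction h with
  | refl => exact subset_rfl
  | step h ih => exact (subset_trans ih (chainSet_succ_self hε hp _))

lemma chainSet_shift {S : Set E} {ε : ℝ} :
    ∀ n (p x : E), p ∈ S →
      (x ∈ chainSet S ε p (n+1) ↔ ∃ q ∈ S, dist q p < ε ∧ x ∈ chainSet S ε q n)
  | 0, p, x, hp => by
      constructor
      · rintro ⟨hxS, y, hy, hd⟩
        rw [chainSet] at hy; simp at hy; subst hy
        exact ⟨x, hxS, hd, by rw [chainSet]; simp⟩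
      · rintro ⟨q, hq, hd, hx⟩
        rw [chainSet] at hx; simp at hx; subst hx
        exact ⟨hq, p, by rw [chainSet]; simp, by simpa [dist_comm] using hd⟩
  | (n+1), p, x, hp => by
      constructor
      · rintro ⟨hxS, y, hy, hd⟩
        obtain ⟨q, hq, hdq, hyq⟩ := (chainSet_shift n p y hp).1 hy
        exact ⟨q, hq, hdq, hxS, y, hyq, hd⟩
      · rintro ⟨q, hq, hdq, hxS, y, hy, hd⟩
        exact ⟨hxS, y, (chainSet_shift n p y hp).2 ⟨q, hq, hdq, hy⟩, hd⟩

lemma chainSet_symm {S : Set E} {ε : ℝ} :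
    ∀ n (p x : E), p ∈ S → x ∈ S →
      (x ∈ chainSet S ε p n ↔ p ∈ chainSet S ε x n)
  | 0, p, x, hp, hx => by rw [chainSet, chainSet]; simp [eq_comm]
  | (n+1), p, x, hp, hx => by
      rw [chainSet_shift n p x hp]
      constructor
      · rintro ⟨q, hq, hdq, hxq⟩
        exact ⟨hp, q, (chainSet_symm n q x hq hx).1 hxq, by rwa [dist_comm]⟩
      · rintro ⟨_, q, hq, hdq⟩
        have hqS : q ∈ S := chainSet_subset hx n hq
        exact ⟨q, hqS, by rwa [dist_comm], (chainSet_symm n q x hqS hx).2 hq⟩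

lemma chainSet_trans {S : Set E} {ε : ℝ} {p : E} :
    ∀ (m : ℕ) (q x : E) (n : ℕ), q ∈ chainSet S ε p n → x ∈ chainSet S ε q m →
      x ∈ chainSet S ε p (n+m)
  | 0, q, x, n, hq, hx => by
      rw [chainSet] at hx; simp at hx; subst hx; simpa using hq
  | (m+1), q, x, n, hq, hx => by
      obtain ⟨hxS, y, hy, hd⟩ := hx
      exact ⟨hxS, y, chainSet_trans m q y n hq hy, hd⟩

/-- Uniform chain connectivity on a compact preconnected set. -/
lemma chain_uniform {S : Set E} (hS : IsCompact S) (hconn : IsPreconnected S)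
    (hne : S.Nonempty) {ε : ℝ} (hε : 0 < ε) :
    ∃ M : ℕ, 0 < M ∧ ∀ p ∈ S, S ⊆ chainSet S ε p M := by
  obtain ⟨p₀, hp₀⟩ := hne
  -- open sets V n
  set V : ℕ → Set E := fun n => ⋃ y ∈ chainSet S ε p₀ (n+1), ball y ε with hV
  have hVopen : ∀ n, IsOpen (V n) := fun n => isOpen_biUnion fun _ _ => isOpen_ball
  have hchainV : ∀ n, chainSet S ε p₀ (n+1) ⊆ V n := by
    intro n y hy
    exact Set.mem_biUnion hy (mem_ball_self hε)
  have hVchain : ∀ n, S ∩ V n ⊆ chainSet S ε p₀ (n+2) := by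
    rintro n x ⟨hxS, hxV⟩
    obtain ⟨y, hy, hxy⟩ := Set.mem_iUnion₂.1 hxV
    exact ⟨hxS, y, hy, mem_ball.1 hxy⟩
  set U : Set E := ⋃ n, chainSet S ε p₀ (n+1) with hU
  have hclosU : ∀ x ∈ S, x ∈ closure U → x ∈ U := by
    intro x hxS hxc
    obtain ⟨y, hyU, hxy⟩ := Metric.mem_closure_iff.1 hxc ε hε
    obtain ⟨n, hy⟩ := Set.mem_iUnion.1 hyU
    exact Set.mem_iUnion.2 ⟨n+1, ⟨hxS, y, hy, hxy⟩⟩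
  have hSU : S ⊆ U := by
    have hsub : S ⊆ (⋃ n, V n) ∪ (closure U)ᶜ := by
      intro x hxS
      by_cases hx : x ∈ closure U
      · have hxU := hclosU x hxS hx
        obtain ⟨n, hn⟩ := Set.mem_iUnion.1 hxU
        exact Or.inl (Set.mem_iUnion.2 ⟨n, hchainV n hn⟩)
      · exact Or.inr hx
    have h1 : (S ∩ ⋃ n, V n).Nonempty := by
      refine ⟨p₀, hp₀, Set.mem_iUnion.2 ⟨0, hchainV 0 ?_⟩⟩
      exact ⟨hp₀, p₀, by rw [chainSet]; simp, by simpa using hε⟩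
    by_cases h2 : (S ∩ (closure U)ᶜ).Nonempty
    · exfalso
      obtain ⟨z, hzS, hzV, hzC⟩ := hconn _ _ (isOpen_iUnion hVopen)
        (isOpen_compl_iff.2 isClosed_closure) hsub h1 h2
      obtain ⟨n, hzn⟩ := Set.mem_iUnion.1 hzV
      exact hzC (subset_closure (Set.mem_iUnion.2 ⟨n+1, hVchain n ⟨hzS, hzn⟩⟩))
    · intro x hxS
      rcases hsub hxS with h | h
      · obtain ⟨n, hn⟩ := Set.mem_iUnion.1 h
        exact Set.mem_iUnion.2 ⟨n+1, hVchain n ⟨hxS, hn⟩⟩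
      · exact absurd ⟨x, hxS, h⟩ h2
  -- compactness: S covered by the monotone open family V
  have hcover : S ⊆ ⋃ n, V n := by
    intro x hx
    obtain ⟨n, hn⟩ := Set.mem_iUnion.1 (hSU hx)
    exact Set.mem_iUnion.2 ⟨n, hchainV n hn⟩
  obtain ⟨t, ht⟩ := hS.elim_finite_subcover V hVopen hcover
  have hVmono : ∀ {a b : ℕ}, a ≤ b → V a ⊆ V b := by
    intro a b hab
    apply Set.biUnion_subset_biUnion_left
    exact chainSet_mono hε hp₀ (Nat.succ_le_succ hab)
  set N : ℕ := t.sup id with hN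
  have hSV : S ⊆ V N := by
    intro x hx
    obtain ⟨n, hnt, hxn⟩ := Set.mem_iUnion₂.1 (ht hx)
    exact hVmono (Finset.le_sup (f := id) hnt) hxn
  have hSA : S ⊆ chainSet S ε p₀ (N+2) := fun x hx => hVchain N ⟨hx, hSV hx⟩
  refine ⟨(N+2) + (N+2), by omega, fun p hp x hx => ?_⟩
  have h1 : p₀ ∈ chainSet S ε p (N+2) := (chainSet_symm _ p₀ p hp₀ hp).1 (hSA hp)
  exact chainSet_trans _ p₀ x _ h1 (hSA hx)

end Chain

section Step

open Metric



variable {d : ℕ}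

local notation "EE" => EuclideanSpace ℝ (Fin d)

/-- One application of the operator spreads positivity by ε₀/2. -/
lemma step_lemma (Ω S : Set EE) (hΩopen : IsOpen Ω) (hSdef : S = closure Ω)
    (hScomp : IsCompact S)
    (r : EE → ℝ) (hr : ContinuousOn r S) (hrpos : ∀ x ∈ S, 0 < r x)
    (k : EE → EE → ℝ)
    (hk : ContinuousOn (fun q : EE × EE => k q.1 q.2) (S ×ˢ S))
    (hknn : ∀ y ∈ S, ∀ x ∈ S, 0 ≤ k y x)
    (ε₀ c₀ : ℝ) (hε₀ : 0 < ε₀) (hc₀ : 0 < c₀)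
    (hklb : ∀ y ∈ S, ∀ x ∈ S, dist y x < ε₀ → c₀ < k y x)
    (f : EE → ℝ) (hfc : ContinuousOn f S) (hfnn : ∀ x ∈ S, 0 ≤ f x) :
    ContinuousOn (fun x => r x * f x + ∫ y in S, k y x * f y) S ∧
    (∀ x ∈ S, 0 ≤ r x * f x + ∫ y in S, k y x * f y) ∧
    (∀ x₀ ∈ S, 0 < f x₀ → ∀ x ∈ S, dist x x₀ < ε₀/2 →
      0 < r x * f x + ∫ y in S, k y x * f y) := by
  have hSmeas : MeasurableSet S := hScomp.isClosed.measurableSet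
  have hfin : volume S < ⊤ := hScomp.measure_lt_top
  -- integrand continuity in y for fixed x ∈ S
  have hky : ∀ x ∈ S, ContinuousOn (fun y => k y x * f y) S := by
    intro x hx
    refine ContinuousOn.mul ?_ hfc
    have : ContinuousOn (fun y : EE => (y, x)) S :=
      (continuous_id.prodMk continuous_const).continuousOn
    exact hk.comp this (fun y hy => Set.mk_mem_prod hy hx)
  have hint : ∀ x ∈ S, IntegrableOn (fun y => k y x * f y) S :=
    fun x hx => (hky x hx).integrableOn_compact hScomp
  have hintnn : ∀ x ∈ S, 0 ≤ ∫ y in S, k y x * f y := by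
    intro x hx
    exact setIntegral_nonneg hSmeas fun y hy =>
      mul_nonneg (hknn y hy x hx) (hfnn y hy)
  constructor
  · -- continuity
    refine ContinuousOn.add (hr.mul hfc) ?_
    obtain ⟨Ck, hCk⟩ := (hScomp.prod hScomp).exists_bound_of_continuousOn hk
    obtain ⟨Cf, hCf⟩ := hScomp.exists_bound_of_continuousOn hfc
    refine continuousOn_of_dominated (bound := fun _ => Ck * Cf) ?_ ?_ ?_ ?_
    · intro x hx
      exact ((hky x hx).aestronglyMeasurable hSmeas)
    · intro x hx
      refine (ae_restrict_iff' hSmeas).2 (ae_of_all _ fun y hy => ?_)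
      rw [norm_mul]
      have h1 : ‖k y x‖ ≤ Ck := hCk (y, x) (Set.mk_mem_prod hy hx)
      have h2 : ‖f y‖ ≤ Cf := hCf y hy
      exact mul_le_mul h1 h2 (norm_nonneg _) (le_trans (norm_nonneg _) h1)
    · exact integrableOn_const hfin.ne
    · refine (ae_restrict_iff' hSmeas).2 (ae_of_all _ fun y hy => ?_)
      refine ContinuousOn.mul ?_ continuousOn_const
      have : ContinuousOn (fun x : EE => (y, x)) S :=
        (continuous_const.prodMk continuous_id).continuousOn
      exact hk.comp this (fun x hx => Set.mk_mem_prod hy hx)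
  constructor
  · intro x hx
    exact add_nonneg (mul_nonneg (hrpos x hx).le (hfnn x hx)) (hintnn x hx)
  · intro x₀ hx₀ hfx₀ x hx hdx
    -- get δ from continuity of f at x₀
    have hev : {y | f x₀ / 2 < f y} ∈ 𝓝[S] x₀ :=
      (hfc x₀ hx₀).eventually (lt_mem_nhds (half_lt_self hfx₀))
    obtain ⟨δ, hδ, hδsub⟩ := Metric.mem_nhdsWithin_iff.1 hev
    set ρ : ℝ := min δ (ε₀/2) with hρdef
    have hρ : 0 < ρ := lt_min hδ (half_pos hε₀)
    set W : Set EE := S ∩ ball x₀ ρ with hW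
    have hWmeas : MeasurableSet W := hSmeas.inter measurableSet_ball
    have hWpos : 0 < volume W := by
      obtain ⟨z, hzΩ, hzd⟩ := Metric.mem_closure_iff.1 (hSdef ▸ hx₀) ρ hρ
      have hzb : z ∈ ball x₀ ρ := mem_ball.2 (by rwa [dist_comm])
      have h1 : 0 < volume (Ω ∩ ball x₀ ρ) :=
        (hΩopen.inter isOpen_ball).measure_pos volume ⟨z, hzΩ, hzb⟩
      refine lt_of_lt_of_le h1 (measure_mono ?_)
      exact Set.inter_subset_inter_left _ (hSdef ▸ subset_closure)
    have hWfin : volume W ≠ ⊤ :=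
      (lt_of_le_of_lt (measure_mono Set.inter_subset_left) hfin).ne
    have hlow : ∀ y ∈ W, c₀ * (f x₀ / 2) ≤ k y x * f y := by
      rintro y ⟨hyS, hyb⟩
      have hyρ : dist y x₀ < ρ := mem_ball.1 hyb
      have hfy : f x₀ / 2 < f y :=
        hδsub ⟨mem_ball.2 (lt_of_lt_of_le hyρ (min_le_left _ _)), hyS⟩
      have hky : c₀ < k y x := by
        refine hklb y hyS x hx ?_
        calc dist y x ≤ dist y x₀ + dist x₀ x := dist_triangle _ _ _
          _ < ε₀/2 + ε₀/2 := by
              refine add_lt_add (lt_of_lt_of_le hyρ (min_le_right _ _)) ?_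
              rwa [dist_comm]
          _ = ε₀ := by ring
      exact mul_le_mul hky.le hfy.le (half_pos hfx₀).le (hknn y hyS x hx)
    have hintW : IntegrableOn (fun y => k y x * f y) W :=
      (hint x hx).mono_set Set.inter_subset_left
    have h2 : c₀ * (f x₀ / 2) * (volume W).toReal ≤ ∫ y in W, k y x * f y :=
      by have := setIntegral_ge_of_const_le_real hWmeas hWfin hlow hintW
         rwa [measureReal_def] at this
    have h3 : (∫ y in W, k y x * f y) ≤ ∫ y in S, k y x * f y := by
      refine setIntegral_mono_set (hint x hx) ?_ (HasSubset.Subset.eventuallyLE Set.inter_subset_left)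
      exact (ae_restrict_iff' hSmeas).2 (ae_of_all _ fun y hy =>
        mul_nonneg (hknn y hy x hx) (hfnn y hy))
    have hpos : 0 < ∫ y in S, k y x * f y := by
      refine lt_of_lt_of_le ?_ (le_trans h2 h3)
      exact mul_pos (mul_pos hc₀ (half_pos hfx₀))
        (ENNReal.toReal_pos hWpos.ne' hWfin)
    exact add_pos_of_nonneg_of_pos (mul_nonneg (hrpos x hx).le (hfnn x hx)) hpos

end Step

/-- Iterating an operator with the spreading property gives positivity on chain sets. -/
lemma iter_pos {d : ℕ} (S : Set (EuclideanSpace ℝ (Fin d)))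
    (T : (EuclideanSpace ℝ (Fin d) → ℝ) → (EuclideanSpace ℝ (Fin d) → ℝ))
    (ε : ℝ)
    (hT : ∀ g, ContinuousOn g S → (∀ x ∈ S, 0 ≤ g x) →
      ContinuousOn (T g) S ∧ (∀ x ∈ S, 0 ≤ T g x) ∧
      (∀ x₀ ∈ S, 0 < g x₀ → ∀ x ∈ S, dist x x₀ < ε → 0 < T g x))
    (f : EuclideanSpace ℝ (Fin d) → ℝ)
    (hfc : ContinuousOn f S) (hfnn : ∀ x ∈ S, 0 ≤ f x)
    (p : EuclideanSpace ℝ (Fin d)) (hp : p ∈ S) (hfp : 0 < f p) :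
    ∀ n, ContinuousOn (T^[n] f) S ∧ (∀ x ∈ S, 0 ≤ T^[n] f x) ∧
      ∀ x ∈ chainSet S ε p n, 0 < T^[n] f x := by
  intro n
  induction n with
  | zero =>
      refine ⟨hfc, hfnn, ?_⟩
      intro x hx
      rw [chainSet] at hx; simp at hx; subst hx
      exact hfp
  | succ n ih =>
      obtain ⟨hc, hnn, hpos⟩ := ih
      obtain ⟨hc', hnn', hsp⟩ := hT _ hc hnn
      rw [Function.iterate_succ_apply']
      refine ⟨hc', hnn', ?_⟩
      rintro x ⟨hxS, y, hy, hd⟩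
      exact hsp y (chainSet_subset hp n hy) (hpos y hy) x hxS hd

/-- There exists m ≥ 1 such that for every nonzero nonnegative continuous f on S and every
x ∈ S, ((r+J)^m f)(x) > 0, and likewise for r+G: the operators r+J and r+G are irreducible. -/
theorem stmt0 {d : ℕ} (Ω S : Set (EuclideanSpace ℝ (Fin d)))
    (hΩne : Ω.Nonempty) (hΩopen : IsOpen Ω) (hΩbdd : Bornology.IsBounded Ω)
    (hΩconn : IsConnected Ω) (hSdef : S = closure Ω)
    (hScomp : IsCompact S) (hSvol : 0 < volume S)
    (r : EuclideanSpace ℝ (Fin d) → ℝ) (hr : ContinuousOn r S)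
    (hrpos : ∀ x ∈ S, 0 < r x)
    (K : EuclideanSpace ℝ (Fin d) → EuclideanSpace ℝ (Fin d) → ℝ)
    (hK : ContinuousOn (fun q : EuclideanSpace ℝ (Fin d) × EuclideanSpace ℝ (Fin d) =>
      K q.1 q.2) (S ×ˢ S))
    (hKnn : ∀ x ∈ S, ∀ y ∈ S, 0 ≤ K x y)
    (ε₀ c₀ : ℝ) (hε₀ : 0 < ε₀) (hc₀ : 0 < c₀)
    (hKlb : ∀ x ∈ S, ∀ y ∈ S, dist y x < ε₀ → c₀ < K x y) :
    ∃ m : ℕ, 0 < m ∧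
      (∀ f : EuclideanSpace ℝ (Fin d) → ℝ, ContinuousOn f S → (∀ x ∈ S, 0 ≤ f x) →
        (∃ x ∈ S, f x ≠ 0) → ∀ x ∈ S, 0 < (opJ S r K)^[m] f x) ∧
      (∀ f : EuclideanSpace ℝ (Fin d) → ℝ, ContinuousOn f S → (∀ x ∈ S, 0 ≤ f x) →
        (∃ x ∈ S, f x ≠ 0) → ∀ x ∈ S, 0 < (opG S r K)^[m] f x) := by
  have hSne : S.Nonempty := ⟨hΩne.choose, by rw [hSdef]; exact subset_closure hΩne.choose_spec⟩
  have hSpre : IsPreconnected S := by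
    rw [hSdef]; exact hΩconn.isPreconnected.closure
  obtain ⟨M, hM0, hM⟩ := chain_uniform hScomp hSpre hSne (half_pos hε₀)
  have key : ∀ (k : EuclideanSpace ℝ (Fin d) → EuclideanSpace ℝ (Fin d) → ℝ),
      ContinuousOn (fun q : EuclideanSpace ℝ (Fin d) × EuclideanSpace ℝ (Fin d) =>
        k q.1 q.2) (S ×ˢ S) →
      (∀ y ∈ S, ∀ x ∈ S, 0 ≤ k y x) →
      (∀ y ∈ S, ∀ x ∈ S, dist y x < ε₀ → c₀ < k y x) →
      ∀ f : EuclideanSpace ℝ (Fin d) → ℝ, ContinuousOn f S → (∀ x ∈ S, 0 ≤ f x) →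
      (∃ x ∈ S, f x ≠ 0) →
      ∀ x ∈ S, 0 < (fun (g : EuclideanSpace ℝ (Fin d) → ℝ) x =>
        r x * g x + ∫ y in S, k y x * g y)^[M] f x := by
    rintro k hk hknn hklb f hfc hfnn ⟨p, hp, hfp0⟩ x hx
    have hfp : 0 < f p := lt_of_le_of_ne (hfnn p hp) (Ne.symm hfp0)
    have hT := fun g hc hnn => step_lemma Ω S hΩopen hSdef hScomp r hr hrpos
      k hk hknn ε₀ c₀ hε₀ hc₀ hklb g hc hnn
    exact (iter_pos S _ (ε₀/2) hT f hfc hfnn p hp hfp M).2.2 x (hM p hp hx)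
  refine ⟨M, hM0, ?_, ?_⟩
  · intro f hfc hfnn hne x hx
    exact key K hK (fun y hy x hx => hKnn y hy x hx)
      (fun y hy x hx h => hKlb y hy x hx (by rwa [dist_comm])) f hfc hfnn hne x hx
  · intro f hfc hfnn hne x hx
    have hk' : ContinuousOn (fun q : EuclideanSpace ℝ (Fin d) × EuclideanSpace ℝ (Fin d) =>
        K q.2 q.1) (S ×ˢ S) :=
      hK.comp continuous_swap.continuousOn (fun q hq => ⟨hq.2, hq.1⟩)
    exact key (fun y x => K x y) hk' (fun y hy x hx => hKnn x hx y hy)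
      (fun y hy x hx h => hKlb x hx y hy h) f hfc hfnn hne x hx
end

section
/- The spectral radii of r+J and r+G coincide: lim_{n→∞} ‖(r+J)^n‖^{1/n} = lim_{n→∞} ‖(r+G)^n‖^{1/n}, where ‖·‖ denotes the operator norm on C(S) (both limits exist by submultiplicativity of the operator norm). -/
open MeasureTheory Filter Topology Function Set

set_option linter.unusedSectionVars false
set_option linter.unusedVariables false
set_option maxHeartbeats 1000000

namespace Stmt10Aux

lemma exists_bound {Z : Type*} [TopologicalSpace Z] [CompactSpace Z] {f : Z → ℝ}
    (hf : Continuous f) : ∃ C, 0 ≤ C ∧ ∀ z, |f z| ≤ C := by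
  obtain ⟨C, hC⟩ := (isCompact_range hf.norm).bddAbove
  refine ⟨max C 0, le_max_right _ _, fun z => ?_⟩
  calc |f z| = ‖f z‖ := (Real.norm_eq_abs _).symm
    _ ≤ C := hC ⟨z, rfl⟩
    _ ≤ max C 0 := le_max_left _ _

lemma integrable_of_continuous {β : Type*} [MeasurableSpace β] [TopologicalSpace β]
    [OpensMeasurableSpace β] [CompactSpace β] (m : Measure β) [IsFiniteMeasure m]
    {f : β → ℝ} (hf : Continuous f) : Integrable f m := by
  obtain ⟨C, _, hC⟩ := exists_bound hf
  exact (integrable_const C).mono' hf.aestronglyMeasurable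
    (Eventually.of_forall fun z => by simpa using hC z)

variable {α : Type*} [MeasurableSpace α] [TopologicalSpace α] [CompactSpace α]
  [BorelSpace α] [SecondCountableTopology α]
  (ν : Measure α) [IsFiniteMeasure ν]

lemma cont_integral {X : Type*} [TopologicalSpace X] [CompactSpace X]
    [FirstCountableTopology X]
    {F : X → α → ℝ} (hF : Continuous fun p : X × α => F p.1 p.2) :
    Continuous fun x => ∫ y, F x y ∂ν := by
  obtain ⟨C, _, hC⟩ := exists_bound hF
  apply continuous_of_dominated (bound := fun _ => C)
  · exact fun x => (hF.comp (Continuous.prodMk_right x)).aestronglyMeasurable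
  · exact fun x => Eventually.of_forall fun y => by simpa using hC (x, y)
  · exact integrable_const C
  · exact Eventually.of_forall fun y => hF.comp (continuous_id.prodMk continuous_const)

lemma swap_integral {F : α → α → ℝ} (hF : Continuous fun p : α × α => F p.1 p.2) :
    ∫ x, ∫ y, F x y ∂ν ∂ν = ∫ y, ∫ x, F x y ∂ν ∂ν :=
  integral_integral_swap (f := F)
    (integrable_of_continuous (ν.prod ν) (f := uncurry F) hF)

/-- The common iterated kernels of the integral-operator parts of `(r+J)^(m+1)` and
`(r+G)^(m+1)`. -/
noncomputable def ker (r : α → ℝ) (K : α → α → ℝ) : ℕ → α → α → ℝ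
  | 0 => K
  | (m+1) => fun x y =>
      r x ^ (m+1) * K x y + ker r K m x y * r y + ∫ w, ker r K m x w * K w y ∂ν

variable {r : α → ℝ} {K : α → α → ℝ}

lemma ker_cont (hr : Continuous r) (hK : Continuous (uncurry K)) :
    ∀ m, Continuous (uncurry (ker ν r K m))
  | 0 => hK
  | (m+1) => by
    have ih : Continuous fun p : α × α => ker ν r K m p.1 p.2 := ker_cont hr hK m
    have hint : Continuous fun p : α × α => ∫ w, ker ν r K m p.1 w * K w p.2 ∂ν := by
      apply cont_integral
      exact (ih.comp ((continuous_fst.comp continuous_fst).prodMk continuous_snd)).mul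
        (hK.comp (continuous_snd.prodMk (continuous_snd.comp continuous_fst)))
    show Continuous fun p : α × α =>
      r p.1 ^ (m+1) * K p.1 p.2 + ker ν r K m p.1 p.2 * r p.2
        + ∫ w, ker ν r K m p.1 w * K w p.2 ∂ν
    exact (((hr.comp continuous_fst).pow _).mul hK |>.add
      (ih.mul (hr.comp continuous_snd))).add hint

lemma ker_nonneg (hr0 : ∀ x, 0 ≤ r x) (hK0 : ∀ x y, 0 ≤ K x y) :
    ∀ m x y, 0 ≤ ker ν r K m x y
  | 0, x, y => hK0 x y
  | (m+1), x, y => by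
    have ih := ker_nonneg hr0 hK0 m
    have h3 : 0 ≤ ∫ w, ker ν r K m x w * K w y ∂ν :=
      integral_nonneg fun w => mul_nonneg (ih x w) (hK0 w y)
    have h1 : 0 ≤ r x ^ (m+1) * K x y := mul_nonneg (pow_nonneg (hr0 x) _) (hK0 x y)
    have h2 : 0 ≤ ker ν r K m x y * r y := mul_nonneg (ih x y) (hr0 y)
    show 0 ≤ r x ^ (m+1) * K x y + ker ν r K m x y * r y + ∫ w, ker ν r K m x w * K w y ∂ν
    positivity

lemma expand {b a f : α → ℝ} {c h : α → α → ℝ} {g : α → ℝ}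
    (hb : Continuous b) (hc : Continuous (uncurry c)) (ha : Continuous a)
    (hh : Continuous (uncurry h)) (hf : Continuous f)
    (hg : ∀ y, g y = a y * f y + ∫ z, h y z * f z ∂ν) (x : α) :
    b x * g x + ∫ y, c x y * g y ∂ν
      = (b x * a x) * f x
        + ∫ y, (b x * h x y + c x y * a y + ∫ w, c x w * h w y ∂ν) * f y ∂ν := by
  have I : ∀ {u : α → ℝ}, Continuous u → Integrable u ν :=
    fun hu => integrable_of_continuous ν hu
  have hcx : Continuous fun y => c x y := hc.comp (continuous_const.prodMk continuous_id)
  have hIh : Continuous fun y => ∫ z, h y z * f z ∂ν :=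
    cont_integral ν (hh.mul (hf.comp continuous_snd))
  have hhx : Continuous fun y => h x y := hh.comp (continuous_const.prodMk continuous_id)
  have hcw : Continuous fun y => ∫ w, c x w * h w y ∂ν :=
    cont_integral ν ((hc.comp (continuous_const.prodMk continuous_snd)).mul
      (hh.comp (continuous_snd.prodMk continuous_fst)))
  have eR : ∫ y, (b x * h x y + c x y * a y + ∫ w, c x w * h w y ∂ν) * f y ∂ν
      = ∫ y, (b x * h x y) * f y ∂ν + ∫ y, (c x y * a y) * f y ∂ν
        + ∫ y, (∫ w, c x w * h w y ∂ν) * f y ∂ν := by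
    have e : (fun y => (b x * h x y + c x y * a y + ∫ w, c x w * h w y ∂ν) * f y)
        = fun y => ((b x * h x y) * f y + (c x y * a y) * f y)
            + (∫ w, c x w * h w y ∂ν) * f y := funext fun y => by ring
    have iA : Integrable (fun y => b x * h x y * f y) ν :=
      I ((continuous_const.mul hhx).mul hf)
    have iB : Integrable (fun y => c x y * a y * f y) ν := I ((hcx.mul ha).mul hf)
    have iC : Integrable (fun y => (∫ w, c x w * h w y ∂ν) * f y) ν := I (hcw.mul hf)
    have iAB : Integrable (fun y => b x * h x y * f y + c x y * a y * f y) ν := iA.add iB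
    rw [e, integral_add iAB iC, integral_add iA iB]
  rw [eR]
  have e1 : (fun y => c x y * g y)
      = fun y => c x y * (a y * f y) + c x y * ∫ z, h y z * f z ∂ν :=
    funext fun y => by rw [hg y]; ring
  rw [hg x, e1, integral_add (I (hcx.mul (ha.mul hf)) : Integrable (fun y => c x y * (a y * f y)) ν)
    (I (hcx.mul hIh) : Integrable (fun y => c x y * ∫ z, h y z * f z ∂ν) ν)]
  have e2 : (fun y => c x y * ∫ z, h y z * f z ∂ν)
      = fun y => ∫ z, c x y * (h y z * f z) ∂ν :=
    funext fun y => (integral_const_mul _ _).symm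
  rw [e2, swap_integral ν (F := fun y z => c x y * (h y z * f z))
      ((hc.comp (continuous_const.prodMk continuous_fst)).mul
        (hh.mul (hf.comp continuous_snd)))]
  have e3 : (fun z => ∫ y, c x y * (h y z * f z) ∂ν)
      = fun z => (∫ y, c x y * h y z ∂ν) * f z := by
    funext z
    rw [← integral_mul_const]
    congr 1; funext y; ring
  rw [e3, mul_add (b x)]
  have e4 : b x * ∫ z, h x z * f z ∂ν = ∫ z, (b x * h x z) * f z ∂ν := by
    rw [← integral_const_mul]
    congr 1; funext z; ring
  rw [e4]
  have e5 : (fun y => c x y * (a y * f y)) = fun y => (c x y * a y) * f y :=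
    funext fun y => by ring
  rw [e5]
  ring

variable (TJ TG : C(α, ℝ) →L[ℝ] C(α, ℝ))

lemma repG (hr : Continuous r) (hK : Continuous (uncurry K))
    (hTG : ∀ f : C(α, ℝ), ∀ x, TG f x = r x * f x + ∫ y, K x y * f y ∂ν) :
    ∀ m, ∀ f : C(α, ℝ), ∀ x, (TG ^ (m+1)) f x
      = r x ^ (m+1) * f x + ∫ y, ker ν r K m x y * f y ∂ν := by
  intro m
  induction m with
  | zero =>
    intro f x
    rw [pow_one]
    simpa [ker] using hTG f x
  | succ m ih =>
    intro f x
    have h1 : (TG ^ (m+1+1)) f x = (TG ^ (m+1)) (TG f) x := by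
      rw [pow_succ]; rfl
    rw [h1, ih (TG f) x]
    have := expand ν (b := fun v => r v ^ (m+1)) (c := ker ν r K m) (a := r) (h := K)
      (g := ⇑(TG f)) (f := ⇑f) (hr.pow _) (ker_cont ν hr hK m) hr hK f.continuous
      (hTG f) x
    rw [this]
    have hker : ∀ y : α, (r x ^ (m+1) * K x y + ker ν r K m x y * r y
        + ∫ w, ker ν r K m x w * K w y ∂ν) = ker ν r K (m+1) x y := fun y => by
      simp only [ker]
    simp only [hker, ← pow_succ]

lemma repJ (hr : Continuous r) (hK : Continuous (uncurry K))
    (hTJ : ∀ f : C(α, ℝ), ∀ x, TJ f x = r x * f x + ∫ y, K y x * f y ∂ν) :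
    ∀ m, ∀ f : C(α, ℝ), ∀ x, (TJ ^ (m+1)) f x
      = r x ^ (m+1) * f x + ∫ y, ker ν r K m y x * f y ∂ν := by
  intro m
  induction m with
  | zero =>
    intro f x
    rw [pow_one]
    simpa [ker] using hTJ f x
  | succ m ih =>
    intro f x
    have h1 : (TJ ^ (m+1+1)) f x = TJ ((TJ ^ (m+1)) f) x := by
      rw [pow_succ']; rfl
    rw [h1, hTJ ((TJ ^ (m+1)) f) x]
    have hcc : Continuous (uncurry fun u v : α => K v u) :=
      hK.comp (continuous_snd.prodMk continuous_fst)
    have hhc : Continuous (uncurry fun y z : α => ker ν r K m z y) :=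
      (ker_cont ν hr hK m).comp (continuous_snd.prodMk continuous_fst)
    have := expand ν (b := r) (c := fun u v => K v u) (a := fun v => r v ^ (m+1))
      (h := fun y z => ker ν r K m z y) (g := ⇑((TJ ^ (m+1)) f)) (f := ⇑f)
      hr hcc (hr.pow _) hhc f.continuous (ih f) x
    rw [this]
    have hker : ∀ y : α, (r x * ker ν r K m y x + K y x * r y ^ (m+1)
        + ∫ w, K w x * ker ν r K m y w ∂ν) = ker ν r K (m+1) y x := fun y => by
      have e : (∫ w, K w x * ker ν r K m y w ∂ν) = ∫ w, ker ν r K m y w * K w x ∂ν := by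
        congr 1; funext w; ring
      simp only [ker, e]; ring
    simp only [hker, ← pow_succ']

lemma fekete {F : Type*} [NormedAddCommGroup F] [NormedSpace ℝ F] (T : F →L[ℝ] F)
    {R : ℝ} (hR : 0 < R) (hlow : ∀ n : ℕ, R ^ n ≤ ‖T ^ n‖) :
    ∃ ρ : ℝ, R ≤ ρ ∧ Tendsto (fun n : ℕ => ‖T ^ n‖ ^ (1 / (n : ℝ))) atTop (𝓝 ρ) := by
  have hpos : ∀ n, (0:ℝ) < ‖T ^ n‖ := fun n => lt_of_lt_of_le (pow_pos hR n) (hlow n)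
  set u : ℕ → ℝ := fun n => Real.log ‖T ^ n‖ with hu
  have hsub : Subadditive u := by
    intro m n
    have hmn : ‖T ^ (m + n)‖ ≤ ‖T ^ m‖ * ‖T ^ n‖ := by
      rw [pow_add]; exact norm_mul_le _ _
    calc u (m+n) ≤ Real.log (‖T ^ m‖ * ‖T ^ n‖) :=
          (Real.log_le_log_iff (hpos _) (mul_pos (hpos m) (hpos n))).mpr hmn
      _ = u m + u n := Real.log_mul (hpos m).ne' (hpos n).ne'
  have hkey : ∀ n : ℕ, 1 ≤ n → Real.log R ≤ u n / n := by
    intro n h1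
    have hn : (0:ℝ) < n := by exact_mod_cast h1
    rw [le_div_iff₀ hn]
    calc Real.log R * n = Real.log (R ^ n) := by rw [Real.log_pow]; ring
      _ ≤ u n := (Real.log_le_log_iff (pow_pos hR n) (hpos n)).mpr (hlow n)
  have hbdd : BddBelow (range fun n : ℕ => u n / n) := by
    refine ⟨min (Real.log R) 0, ?_⟩
    rintro x ⟨n, rfl⟩
    rcases Nat.eq_zero_or_pos n with h0 | h1
    · simp [h0]
    · exact le_trans (min_le_left _ _) (hkey n h1)
  have hten := hsub.tendsto_lim hbdd
  refine ⟨Real.exp hsub.lim, ?_, ?_⟩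
  · have hlim : Real.log R ≤ hsub.lim :=
      ge_of_tendsto hten (by filter_upwards [eventually_ge_atTop 1] with n hn using hkey n hn)
    calc R = Real.exp (Real.log R) := (Real.exp_log hR).symm
      _ ≤ _ := Real.exp_le_exp.mpr hlim
  · have h1 : Tendsto (fun n : ℕ => Real.exp (u n / n)) atTop (𝓝 (Real.exp hsub.lim)) :=
      (Real.continuous_exp.tendsto _).comp hten
    refine h1.congr' ?_
    filter_upwards [eventually_ge_atTop 1] with n hn
    rw [Real.rpow_def_of_pos (hpos n), mul_one_div]


lemma core [Nonempty α]
    (hr : Continuous r) (hK : Continuous (uncurry K))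
    (hr0 : ∀ x, 0 ≤ r x) (hK0 : ∀ x y, 0 ≤ K x y)
    {R Ck : ℝ} (hRpos : 0 < R) (hrR : ∀ x, r x ≤ R) (hCk0 : 0 ≤ Ck)
    (hKCk : ∀ x y, K x y ≤ Ck)
    (hTJ : ∀ f : C(α, ℝ), ∀ x, TJ f x = r x * f x + ∫ y, K y x * f y ∂ν)
    (hTG : ∀ f : C(α, ℝ), ∀ x, TG f x = r x * f x + ∫ y, K x y * f y ∂ν)
    {ρJ ρG : ℝ}
    (hJ : Tendsto (fun n : ℕ => ‖TJ ^ n‖ ^ (1 / (n : ℝ))) atTop (𝓝 ρJ))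
    (hG : Tendsto (fun n : ℕ => ‖TG ^ n‖ ^ (1 / (n : ℝ))) atTop (𝓝 ρG))
    (hRρ : R ≤ ρG) : ρJ ≤ ρG := by
  have I : ∀ {u : α → ℝ}, Continuous u → Integrable u ν :=
    fun hu => integrable_of_continuous ν hu
  refine le_of_forall_gt_imp_ge_of_dense fun t ht => ?_
  obtain ⟨s, hs1, hs2⟩ := exists_between ht
  have hRs : R ≤ s := le_trans hRρ hs1.le
  have hs0 : (0:ℝ) < s := lt_of_lt_of_le hRpos hRs
  have ht0 : (0:ℝ) < t := hs0.trans hs2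
  obtain ⟨N, hN⟩ := eventually_atTop.mp (hG.eventually_lt_const hs1)
  have hbig : ∀ n, max N 1 ≤ n → ‖TG ^ n‖ ≤ s ^ n := by
    intro n hn
    have h1 : ‖TG ^ n‖ ^ (1 / (n : ℝ)) < s := hN n (le_trans (le_max_left _ _) hn)
    have hn1 : 1 ≤ n := le_trans (le_max_right _ _) hn
    have hn0 : (n : ℝ) ≠ 0 := Nat.cast_ne_zero.mpr (by omega)
    calc ‖TG ^ n‖ = ‖TG ^ n‖ ^ ((1/(n:ℝ)) * (n:ℝ)) := by
          rw [one_div_mul_cancel hn0, Real.rpow_one]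
      _ = (‖TG ^ n‖ ^ (1 / (n:ℝ))) ^ ((n:ℕ):ℝ) := by
          rw [Real.rpow_mul (by positivity : (0:ℝ) ≤ ‖TG ^ n‖)]
      _ ≤ s ^ ((n:ℕ):ℝ) := Real.rpow_le_rpow (by positivity) h1.le (Nat.cast_nonneg n)
      _ = s ^ n := Real.rpow_natCast s n
  set C : ℝ := 1 + ∑ i ∈ Finset.range (max N 1 + 1), ‖TG ^ i‖ / s ^ i with hCdef
  have hsum_nonneg : ∀ i ∈ Finset.range (max N 1 + 1), (0:ℝ) ≤ ‖TG ^ i‖ / s ^ i :=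
    fun i _ => by positivity
  have hC1 : 1 ≤ C := le_add_of_nonneg_right (Finset.sum_nonneg hsum_nonneg)
  have hC0 : 0 ≤ C := zero_le_one.trans hC1
  have hCb : ∀ m : ℕ, ‖TG ^ m‖ ≤ C * s ^ m := by
    intro m
    rcases le_or_gt m (max N 1) with h | h
    · have hm : m ∈ Finset.range (max N 1 + 1) := Finset.mem_range.mpr (Nat.lt_succ_of_le h)
      have h2 : ‖TG ^ m‖ / s ^ m ≤ C := by
        have := Finset.single_le_sum hsum_nonneg hm
        linarith
      have hsm : (0:ℝ) < s ^ m := by positivity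
      calc ‖TG ^ m‖ = (‖TG ^ m‖ / s ^ m) * s ^ m := by field_simp
        _ ≤ C * s ^ m := mul_le_mul_of_nonneg_right h2 hsm.le
    · exact le_trans (hbig m h.le) (le_mul_of_one_le_left (by positivity) hC1)
  set A : ℝ := (ν univ).toReal with hA
  have hA0 : 0 ≤ A := ENNReal.toReal_nonneg
  have hrow : ∀ m (x : α), (∫ y, ker ν r K m x y ∂ν) ≤ C * s ^ (m+1) := by
    intro m x
    have h1 := repG ν TG hr hK hTG m 1 x
    have h1' : (TG ^ (m+1)) 1 x = r x ^ (m+1) + ∫ y, ker ν r K m x y ∂ν := by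
      simpa using h1
    have h2 : (∫ y, ker ν r K m x y ∂ν) ≤ (TG ^ (m+1)) 1 x := by
      rw [h1']
      nlinarith [pow_nonneg (hr0 x) (m+1)]
    have h3 : (TG ^ (m+1)) 1 x ≤ ‖TG ^ (m+1)‖ :=
      calc (TG ^ (m+1)) 1 x ≤ |(TG ^ (m+1)) 1 x| := le_abs_self _
        _ ≤ ‖(TG ^ (m+1)) 1‖ := by
            rw [← Real.norm_eq_abs]; exact ContinuousMap.norm_coe_le_norm _ x
        _ ≤ ‖TG ^ (m+1)‖ * ‖(1 : C(α,ℝ))‖ := ContinuousLinearMap.le_opNorm _ _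
        _ = ‖TG ^ (m+1)‖ := by rw [norm_one, mul_one]
    calc (∫ y, ker ν r K m x y ∂ν) ≤ ‖TG ^ (m+1)‖ := h2.trans h3
      _ ≤ C * s ^ (m+1) := hCb (m+1)
  set D : ℝ := A * Ck * (1 + C) with hD
  have hD0 : 0 ≤ D := by positivity
  have hcol : ∀ m (v : α), (∫ u, ker ν r K m u v ∂ν) ≤ ((m:ℝ)+1) * D * s ^ m := by
    intro m
    induction m with
    | zero =>
      intro v
      have hc : Continuous fun u => ker ν r K 0 u v :=
        hK.comp (continuous_id.prodMk continuous_const)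
      have h1 : (∫ u, ker ν r K 0 u v ∂ν) ≤ ∫ _, Ck ∂ν :=
        integral_mono (I hc) (integrable_const Ck) (fun u => hKCk u v)
      rw [integral_const, smul_eq_mul] at h1
      have h2 : A * Ck ≤ A * Ck * (1 + C) :=
        le_mul_of_one_le_right (mul_nonneg hA0 hCk0) (by linarith)
      calc (∫ u, ker ν r K 0 u v ∂ν) ≤ A * Ck := h1
        _ ≤ A * Ck * (1 + C) := h2
        _ = (((0:ℕ):ℝ)+1) * D * s ^ 0 := by simp only [hD, pow_zero, Nat.cast_zero]; ring
    | succ m ih =>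
      intro v
      have hkm := ker_cont ν hr hK m
      have hc1 : Continuous fun u => r u ^ (m+1) * K u v :=
        (hr.pow _).mul (hK.comp (continuous_id.prodMk continuous_const))
      have hc2 : Continuous fun u => ker ν r K m u v * r v :=
        (hkm.comp (continuous_id.prodMk continuous_const)).mul continuous_const
      have hc3 : Continuous fun u => ∫ w, ker ν r K m u w * K w v ∂ν :=
        cont_integral ν (hkm.mul (hK.comp (continuous_snd.prodMk continuous_const)))
      have hsplit : (∫ u, ker ν r K (m+1) u v ∂ν)
          = (∫ u, r u ^ (m+1) * K u v ∂ν) + (∫ u, ker ν r K m u v * r v ∂ν)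
            + ∫ u, (∫ w, ker ν r K m u w * K w v ∂ν) ∂ν := by
        have e : (fun u => ker ν r K (m+1) u v) = fun u =>
            (r u ^ (m+1) * K u v + ker ν r K m u v * r v)
              + ∫ w, ker ν r K m u w * K w v ∂ν := by
          funext u; simp only [ker]
        have i12 : Integrable (fun u => r u ^ (m+1) * K u v + ker ν r K m u v * r v) ν :=
          (I hc1).add (I hc2)
        rw [e, integral_add i12 (I hc3), integral_add (I hc1) (I hc2)]
      have b1 : (∫ u, r u ^ (m+1) * K u v ∂ν) ≤ A * (s ^ (m+1) * Ck) := by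
        have hp : ∀ u, r u ^ (m+1) * K u v ≤ s ^ (m+1) * Ck := fun u =>
          mul_le_mul (pow_le_pow_left₀ (hr0 u) (le_trans (hrR u) hRs) _) (hKCk u v)
            (hK0 u v) (by positivity)
        have := integral_mono (I hc1) (integrable_const _) hp
        rwa [integral_const, smul_eq_mul] at this
      have b2 : (∫ u, ker ν r K m u v * r v ∂ν) ≤ (((m:ℝ)+1) * D * s ^ m) * s := by
        rw [integral_mul_const]
        exact mul_le_mul (ih v) (le_trans (hrR v) hRs) (hr0 v) (by positivity)
      have b3 : (∫ u, (∫ w, ker ν r K m u w * K w v ∂ν) ∂ν) ≤ A * (Ck * (C * s ^ (m+1))) := by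
        have hb : ∀ u, (∫ w, ker ν r K m u w * K w v ∂ν) ≤ Ck * (C * s ^ (m+1)) := by
          intro u
          have hcu : Continuous fun w => ker ν r K m u w :=
            hkm.comp (continuous_const.prodMk continuous_id)
          calc (∫ w, ker ν r K m u w * K w v ∂ν) ≤ ∫ w, ker ν r K m u w * Ck ∂ν :=
                integral_mono (I (hcu.mul (hK.comp (continuous_id.prodMk continuous_const))))
                  (I (hcu.mul continuous_const))
                  (fun w => mul_le_mul_of_nonneg_left (hKCk w v) (ker_nonneg ν hr0 hK0 m u w))
            _ = (∫ w, ker ν r K m u w ∂ν) * Ck := integral_mul_const _ _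
            _ ≤ (C * s ^ (m+1)) * Ck := mul_le_mul_of_nonneg_right (hrow m u) hCk0
            _ = Ck * (C * s ^ (m+1)) := mul_comm _ _
        have := integral_mono (I hc3) (integrable_const _) hb
        rwa [integral_const, smul_eq_mul] at this
      have hfin : A * (s ^ (m+1) * Ck) + (((m:ℝ)+1) * D * s ^ m) * s
          + A * (Ck * (C * s ^ (m+1))) = (((m:ℝ)+1)+1) * D * s ^ (m+1) := by
        rw [hD]; ring
      rw [hsplit]
      push_cast
      push_cast at ih
      nlinarith [b1, b2, b3, hfin]
  have hanorm : ∀ m : ℕ, ‖TJ ^ (m+1)‖ ≤ R ^ (m+1) + ((m:ℝ)+1) * D * s ^ m := by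
    intro m
    have hM0 : (0:ℝ) ≤ R ^ (m+1) + ((m:ℝ)+1) * D * s ^ m := by positivity
    apply ContinuousLinearMap.opNorm_le_bound _ hM0
    intro f
    rw [ContinuousMap.norm_le _ (mul_nonneg hM0 (norm_nonneg f))]
    intro x
    rw [Real.norm_eq_abs, repJ ν TJ hr hK hTJ m f x]
    have hfy : ∀ y, |f y| ≤ ‖f‖ := fun y => by
      rw [← Real.norm_eq_abs]; exact ContinuousMap.norm_coe_le_norm f y
    have h1 : |r x ^ (m+1) * f x| ≤ R ^ (m+1) * ‖f‖ := by
      rw [abs_mul, abs_of_nonneg (pow_nonneg (hr0 x) _)]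
      exact mul_le_mul (pow_le_pow_left₀ (hr0 x) (hrR x) _) (hfy x) (abs_nonneg _)
        (by positivity)
    have hkx : Continuous fun y => ker ν r K m y x :=
      (ker_cont ν hr hK m).comp (continuous_id.prodMk continuous_const)
    have h2 : |∫ y, ker ν r K m y x * f y ∂ν| ≤ (((m:ℝ)+1) * D * s ^ m) * ‖f‖ := by
      calc |∫ y, ker ν r K m y x * f y ∂ν| ≤ ∫ y, |ker ν r K m y x| * |f y| ∂ν := by
            simpa [Real.norm_eq_abs, abs_mul] using
              norm_integral_le_integral_norm (μ := ν) (fun y => ker ν r K m y x * f y)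
        _ ≤ ∫ y, ker ν r K m y x * ‖f‖ ∂ν :=
            integral_mono (I (hkx.abs.mul f.continuous.abs)) (I (hkx.mul continuous_const))
              (fun y => by
                rw [abs_of_nonneg (ker_nonneg ν hr0 hK0 m y x)]
                exact mul_le_mul_of_nonneg_left (hfy y) (ker_nonneg ν hr0 hK0 m y x))
        _ = (∫ y, ker ν r K m y x ∂ν) * ‖f‖ := integral_mul_const _ _
        _ ≤ (((m:ℝ)+1) * D * s ^ m) * ‖f‖ :=
            mul_le_mul_of_nonneg_right (hcol m x) (norm_nonneg f)
    calc |r x ^ (m+1) * f x + ∫ y, ker ν r K m y x * f y ∂ν|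
        ≤ |r x ^ (m+1) * f x| + |∫ y, ker ν r K m y x * f y ∂ν| := abs_add_le _ _
      _ ≤ R ^ (m+1) * ‖f‖ + (((m:ℝ)+1) * D * s ^ m) * ‖f‖ := add_le_add h1 h2
      _ = (R ^ (m+1) + ((m:ℝ)+1) * D * s ^ m) * ‖f‖ := by ring
  have hq1 : Tendsto (fun m : ℕ => (R/t) ^ (m+1)) atTop (𝓝 0) :=
    (tendsto_pow_atTop_nhds_zero_of_lt_one (by positivity)
      ((div_lt_one ht0).mpr (lt_of_le_of_lt hRs hs2))).comp (tendsto_add_atTop_nat 1)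
  have hq2 : Tendsto (fun n : ℕ => (n:ℝ) * (s/t) ^ n) atTop (𝓝 0) := by
    have := (summable_pow_mul_geometric_of_norm_lt_one 1
      (r := s/t) (by rw [Real.norm_eq_abs, abs_of_pos (by positivity)]
                     exact (div_lt_one ht0).mpr hs2)).tendsto_atTop_zero
    simpa using this
  have h2' : Tendsto (fun m : ℕ => (((m:ℝ))+1) * (s/t) ^ (m+1)) atTop (𝓝 0) := by
    have h := hq2.comp (tendsto_add_atTop_nat 1)
    exact h.congr (fun m => by simp only [Function.comp_apply]; push_cast; ring)
  have hsumten : Tendsto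
      (fun m : ℕ => (R/t)^(m+1) + (D/s) * ((((m:ℝ))+1) * (s/t)^(m+1))) atTop (𝓝 0) := by
    simpa using hq1.add (h2'.const_mul (D/s))
  have hlt1 : ∀ᶠ m : ℕ in atTop,
      (R/t)^(m+1) + (D/s) * ((((m:ℝ))+1) * (s/t)^(m+1)) < 1 :=
    hsumten.eventually_lt_const one_pos
  have hev2 : ∀ᶠ m : ℕ in atTop, ‖TJ ^ (m+1)‖ ≤ t ^ (m+1) := by
    filter_upwards [hlt1] with m hm
    have heq : ((R/t)^(m+1) + (D/s) * ((((m:ℝ))+1) * (s/t)^(m+1))) * t^(m+1)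
        = R^(m+1) + ((m:ℝ)+1) * D * s ^ m := by
      rw [div_pow, div_pow, pow_succ s m]
      field_simp
    calc ‖TJ ^ (m+1)‖ ≤ R^(m+1) + ((m:ℝ)+1) * D * s ^ m := hanorm m
      _ = ((R/t)^(m+1) + (D/s) * ((((m:ℝ))+1) * (s/t)^(m+1))) * t^(m+1) := heq.symm
      _ ≤ 1 * t^(m+1) := mul_le_mul_of_nonneg_right hm.le (by positivity)
      _ = t^(m+1) := one_mul _
  obtain ⟨M, hM⟩ := eventually_atTop.mp hev2
  have hev3 : ∀ᶠ n : ℕ in atTop, ‖TJ ^ n‖ ^ (1/(n:ℝ)) ≤ t := by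
    rw [eventually_atTop]
    refine ⟨M+1, fun n hn => ?_⟩
    obtain ⟨m, rfl⟩ : ∃ m, n = m + 1 := ⟨n - 1, by omega⟩
    have hm : M ≤ m := by omega
    have hle : ‖TJ ^ (m+1)‖ ≤ t ^ (m+1) := hM m hm
    have hn0 : ((m+1 : ℕ) : ℝ) ≠ 0 := Nat.cast_ne_zero.mpr (by omega)
    calc ‖TJ ^ (m+1)‖ ^ (1/((m+1 : ℕ):ℝ)) ≤ (t ^ (m+1)) ^ (1/((m+1:ℕ):ℝ)) :=
        Real.rpow_le_rpow (by positivity) hle (by positivity)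
      _ = t := by
        rw [← Real.rpow_natCast t (m+1), ← Real.rpow_mul ht0.le, mul_one_div,
          div_self hn0, Real.rpow_one]
  exact le_of_tendsto hJ hev3

end Stmt10Aux

open Stmt10Aux in
/-- The spectral radii of the operators r+J and r+G on C(S) coincide:
lim ‖(r+J)^n‖^{1/n} = lim ‖(r+G)^n‖^{1/n} (both limits exist). -/
theorem stmt10 {d : ℕ} (Ω S : Set (EuclideanSpace ℝ (Fin d)))
    (hΩne : Ω.Nonempty) (hΩopen : IsOpen Ω) (hΩbdd : Bornology.IsBounded Ω)
    (hΩconn : IsConnected Ω) (hSdef : S = closure Ω)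
    (hScomp : IsCompact S) [CompactSpace S] (hSvol : 0 < volume S)
    (r : EuclideanSpace ℝ (Fin d) → ℝ) (hr : ContinuousOn r S)
    (hrpos : ∀ x ∈ S, 0 < r x)
    (K : EuclideanSpace ℝ (Fin d) → EuclideanSpace ℝ (Fin d) → ℝ)
    (hK : ContinuousOn (fun q : EuclideanSpace ℝ (Fin d) × EuclideanSpace ℝ (Fin d) =>
      K q.1 q.2) (S ×ˢ S))
    (hKnn : ∀ x ∈ S, ∀ y ∈ S, 0 ≤ K x y)
    (ε₀ c₀ : ℝ) (hε₀ : 0 < ε₀) (hc₀ : 0 < c₀)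
    (hKlb : ∀ x ∈ S, ∀ y ∈ S, dist y x < ε₀ → c₀ < K x y)
    (TJ TG : C(S, ℝ) →L[ℝ] C(S, ℝ))
    (hTJ : ∀ f : C(S, ℝ), ∀ x : S,
      TJ f x = r (x : EuclideanSpace ℝ (Fin d)) * f x +
        ∫ y : S, K (y : EuclideanSpace ℝ (Fin d)) (x : EuclideanSpace ℝ (Fin d)) * f y
          ∂(volume.comap (Subtype.val : S → EuclideanSpace ℝ (Fin d))))
    (hTG : ∀ f : C(S, ℝ), ∀ x : S,
      TG f x = r (x : EuclideanSpace ℝ (Fin d)) * f x +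
        ∫ y : S, K (x : EuclideanSpace ℝ (Fin d)) (y : EuclideanSpace ℝ (Fin d)) * f y
          ∂(volume.comap (Subtype.val : S → EuclideanSpace ℝ (Fin d)))) :
    ∃ ρ : ℝ, Tendsto (fun n : ℕ => ‖TJ ^ n‖ ^ (1 / (n : ℝ))) atTop (𝓝 ρ) ∧
      Tendsto (fun n : ℕ => ‖TG ^ n‖ ^ (1 / (n : ℝ))) atTop (𝓝 ρ) := by
  have hSclosed : IsClosed S := hSdef ▸ isClosed_closure
  have hSmeas : MeasurableSet S := hSclosed.measurableSet
  have hSne : S.Nonempty := hΩne.mono (hSdef ▸ subset_closure)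
  haveI : Nonempty S := hSne.to_subtype
  set μ : Measure S := volume.comap (Subtype.val) with hμdef
  haveI : IsFiniteMeasure μ := by
    constructor
    rw [hμdef, (MeasurableEmbedding.subtype_coe hSmeas).comap_apply,
      Subtype.coe_image_univ]
    exact hScomp.measure_lt_top
  set r' : S → ℝ := fun x => r ↑x with hr'def
  have hr'c : Continuous r' := hr.restrict
  set K' : S → S → ℝ := fun x y => K ↑x ↑y with hK'def
  have hK'c : Continuous (Function.uncurry K') := by
    have h1 : Continuous fun p : S × S =>
        ((p.1 : EuclideanSpace ℝ (Fin d)), (p.2 : EuclideanSpace ℝ (Fin d))) :=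
      (continuous_subtype_val.comp continuous_fst).prodMk
        (continuous_subtype_val.comp continuous_snd)
    exact hK.comp_continuous h1 (fun p => Set.mk_mem_prod p.1.2 p.2.2)
  have hr'0 : ∀ x : S, 0 ≤ r' x := fun x => (hrpos x x.2).le
  have hK'0 : ∀ x y : S, 0 ≤ K' x y := fun x y => hKnn x x.2 y y.2
  obtain ⟨xh, hxh⟩ := hr'c.exists_forall_ge (by simp [Filter.cocompact_eq_bot])
  set R : ℝ := r' xh with hRdef
  have hRpos : 0 < R := hrpos _ xh.2
  have hrR : ∀ x : S, r' x ≤ R := fun x => hxh x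
  obtain ⟨Ck, hCk0, hCk⟩ := Stmt10Aux.exists_bound hK'c
  have hKCk : ∀ x y : S, K' x y ≤ Ck := fun x y => (le_abs_self _).trans (hCk (x, y))
  have hTJ' : ∀ f : C(S, ℝ), ∀ x : S, TJ f x = r' x * f x + ∫ y, K' y x * f y ∂μ :=
    fun f x => hTJ f x
  have hTG' : ∀ f : C(S, ℝ), ∀ x : S, TG f x = r' x * f x + ∫ y, K' x y * f y ∂μ :=
    fun f x => hTG f x
  haveI : Nontrivial C(S, ℝ) :=
    ⟨0, 1, fun h => zero_ne_one (ContinuousMap.congr_fun h (Classical.arbitrary S))⟩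
  have hlowJ : ∀ n : ℕ, R ^ n ≤ ‖TJ ^ n‖ := by
    intro n
    match n with
    | 0 =>
      rw [pow_zero, pow_zero, ContinuousLinearMap.one_def, ContinuousLinearMap.norm_id]
    | (m+1) =>
      have hre := Stmt10Aux.repJ μ TJ hr'c hK'c hTJ' m 1 xh
      have h0 : (0:ℝ) ≤ ∫ y : S, Stmt10Aux.ker μ r' K' m y xh ∂μ :=
        integral_nonneg fun y => Stmt10Aux.ker_nonneg μ hr'0 hK'0 m y xh
      have h1 : R ^ (m+1) ≤ (TJ ^ (m+1)) 1 xh := by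
        rw [hre]
        simp only [ContinuousMap.one_apply, mul_one]
        rw [← hRdef]
        linarith
      calc R ^ (m+1) ≤ (TJ ^ (m+1)) 1 xh := h1
        _ ≤ ‖(TJ ^ (m+1)) 1‖ := le_trans (le_abs_self _)
            (by rw [← Real.norm_eq_abs]; exact ContinuousMap.norm_coe_le_norm _ xh)
        _ ≤ ‖TJ ^ (m+1)‖ * ‖(1 : C(S,ℝ))‖ := ContinuousLinearMap.le_opNorm _ _
        _ = ‖TJ ^ (m+1)‖ := by rw [norm_one, mul_one]
  have hlowG : ∀ n : ℕ, R ^ n ≤ ‖TG ^ n‖ := by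
    intro n
    match n with
    | 0 =>
      rw [pow_zero, pow_zero, ContinuousLinearMap.one_def, ContinuousLinearMap.norm_id]
    | (m+1) =>
      have hre := Stmt10Aux.repG μ TG hr'c hK'c hTG' m 1 xh
      have h0 : (0:ℝ) ≤ ∫ y : S, Stmt10Aux.ker μ r' K' m xh y ∂μ :=
        integral_nonneg fun y => Stmt10Aux.ker_nonneg μ hr'0 hK'0 m xh y
      have h1 : R ^ (m+1) ≤ (TG ^ (m+1)) 1 xh := by
        rw [hre]
        simp only [ContinuousMap.one_apply, mul_one]
        rw [← hRdef]
        linarith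
      calc R ^ (m+1) ≤ (TG ^ (m+1)) 1 xh := h1
        _ ≤ ‖(TG ^ (m+1)) 1‖ := le_trans (le_abs_self _)
            (by rw [← Real.norm_eq_abs]; exact ContinuousMap.norm_coe_le_norm _ xh)
        _ ≤ ‖TG ^ (m+1)‖ * ‖(1 : C(S,ℝ))‖ := ContinuousLinearMap.le_opNorm _ _
        _ = ‖TG ^ (m+1)‖ := by rw [norm_one, mul_one]
  obtain ⟨ρJ, hRJ, hJt⟩ := Stmt10Aux.fekete TJ hRpos hlowJ
  obtain ⟨ρG, hRG, hGt⟩ := Stmt10Aux.fekete TG hRpos hlowG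
  have h1 : ρJ ≤ ρG :=
    Stmt10Aux.core μ TJ TG hr'c hK'c hr'0 hK'0 hRpos hrR hCk0 hKCk hTJ' hTG' hJt hGt hRG
  have h2 : ρG ≤ ρJ := by
    set K2 : S → S → ℝ := fun x y => K' y x with hK2def
    have hK2c : Continuous (Function.uncurry K2) :=
      hK'c.comp (continuous_snd.prodMk continuous_fst)
    have hK20 : ∀ x y : S, 0 ≤ K2 x y := fun x y => hK'0 y x
    have hK2Ck : ∀ x y : S, K2 x y ≤ Ck := fun x y => hKCk y x
    have hTG2 : ∀ f : C(S, ℝ), ∀ x : S, TG f x = r' x * f x + ∫ y, K2 y x * f y ∂μ :=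
      fun f x => hTG' f x
    have hTJ2 : ∀ f : C(S, ℝ), ∀ x : S, TJ f x = r' x * f x + ∫ y, K2 x y * f y ∂μ :=
      fun f x => hTJ' f x
    exact Stmt10Aux.core μ TG TJ hr'c hK2c hr'0 hK20 hRpos hrR hCk0 hK2Ck hTG2 hTJ2
      hGt hJt hRJ
  refine ⟨ρJ, hJt, ?_⟩
  rwa [le_antisymm h1 h2]
end

section
/- For every λ > −D̲: the integrals defining r_λ and K_λ are finite; r_λ : S → ℝ and K_λ : S × S → ℝ are continuous; r_λ(x) > 0 for every x ∈ S; K_λ is nonnegative; and there exist ε₀' > 0 and c₀' > 0 such that K_λ(x,y) > c₀' for all x, y ∈ S with |y − x| < ε₀'. -/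
open MeasureTheory Filter Topology

/-- R_λ(x,a) = exp(−∫₀ᵃ D(x,α)dα − λa). -/
noncomputable def Rfun {d : ℕ} (D : EuclideanSpace ℝ (Fin d) → ℝ → ℝ) (lam : ℝ)
    (x : EuclideanSpace ℝ (Fin d)) (a : ℝ) : ℝ :=
  Real.exp (-(∫ α in (0:ℝ)..a, D x α) - lam * a)

/-- r_λ(x) = (1−p)∫₀^∞ B(x,a)R_λ(x,a)da. -/
noncomputable def rfun {d : ℕ} (B D : EuclideanSpace ℝ (Fin d) → ℝ → ℝ) (p lam : ℝ)
    (x : EuclideanSpace ℝ (Fin d)) : ℝ :=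
  (1 - p) * ∫ a in Set.Ioi (0:ℝ), B x a * Rfun D lam x a

/-- K_λ(x,y) = p∫₀^∞ B(x,a)k(x,a,y)R_λ(x,a)da. -/
noncomputable def Kfun {d : ℕ} (B D : EuclideanSpace ℝ (Fin d) → ℝ → ℝ)
    (k : EuclideanSpace ℝ (Fin d) → ℝ → EuclideanSpace ℝ (Fin d) → ℝ) (p lam : ℝ)
    (x y : EuclideanSpace ℝ (Fin d)) : ℝ :=
  p * ∫ a in Set.Ioi (0:ℝ), B x a * k x a y * Rfun D lam x a

lemma posint_aux (f : ℝ → ℝ) (hc : ContinuousOn f (Set.Ici 0))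
    (hnn : ∀ a ∈ Set.Ici (0:ℝ), 0 ≤ f a)
    (hint : IntegrableOn f (Set.Ioi 0) volume)
    (hex : ∃ a₂, 0 < a₂ ∧ f a₂ ≠ 0) :
    0 < ∫ a in Set.Ioi (0:ℝ), f a := by
  obtain ⟨a₂, ha₂, hfa₂⟩ := hex
  rw [setIntegral_pos_iff_support_of_nonneg_ae
    ((ae_restrict_iff' measurableSet_Ioi).2 (Filter.Eventually.of_forall
      fun a ha => hnn a (le_of_lt ha))) hint]
  have hca : ContinuousAt f a₂ := hc.continuousAt (Ici_mem_nhds ha₂)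
  have hpos : 0 < f a₂ := (hnn a₂ ha₂.le).lt_of_ne (Ne.symm hfa₂)
  have h1 : ∀ᶠ t in 𝓝 a₂, 0 < f t ∧ t ∈ Set.Ioi (0:ℝ) :=
    (hca.eventually (eventually_gt_nhds hpos)).and
      (Filter.eventually_mem_set.2 (Ioi_mem_nhds ha₂))
  obtain ⟨U, hUsub, hUopen, hU₂⟩ := eventually_nhds_iff.1 h1
  refine lt_of_lt_of_le (hUopen.measure_pos volume ⟨a₂, hU₂⟩)
    (measure_mono fun t ht => ⟨(hUsub t ht).1.ne', (hUsub t ht).2⟩)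

/-- For every λ > −D̲ the integrals defining r_λ and K_λ are finite, r_λ and K_λ are
continuous, r_λ is positive on S, K_λ is nonnegative, and K_λ is bounded below by some
c₀' > 0 near the diagonal. -/
theorem stmt12 {d : ℕ}
    (Ω S : Set (EuclideanSpace ℝ (Fin d)))
    (hΩne : Ω.Nonempty) (hΩopen : IsOpen Ω) (hΩbdd : Bornology.IsBounded Ω)
    (hΩconn : IsConnected Ω) (hSdef : S = closure Ω) (hScomp : IsCompact S)
    (B D : EuclideanSpace ℝ (Fin d) → ℝ → ℝ)
    (hBcont : ContinuousOn (fun q : EuclideanSpace ℝ (Fin d) × ℝ => B q.1 q.2)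
      (S ×ˢ Set.Ici 0))
    (hBbd : ∃ C, ∀ x ∈ S, ∀ a ∈ Set.Ici (0:ℝ), B x a ≤ C)
    (hBnn : ∀ x ∈ S, ∀ a ∈ Set.Ici (0:ℝ), 0 ≤ B x a)
    (Dlow : ℝ) (hDlow : 0 < Dlow)
    (hDcont : ContinuousOn (fun q : EuclideanSpace ℝ (Fin d) × ℝ => D q.1 q.2)
      (S ×ˢ Set.Ici 0))
    (hDbd : ∃ C, ∀ x ∈ S, ∀ a ∈ Set.Ici (0:ℝ), D x a ≤ C)
    (hDlb : ∀ x ∈ S, ∀ a ∈ Set.Ici (0:ℝ), Dlow ≤ D x a)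
    (k : EuclideanSpace ℝ (Fin d) → ℝ → EuclideanSpace ℝ (Fin d) → ℝ)
    (hkcont : ContinuousOn
      (fun q : EuclideanSpace ℝ (Fin d) × ℝ × EuclideanSpace ℝ (Fin d) => k q.1 q.2.1 q.2.2)
      (S ×ˢ (Set.Ici 0 ×ˢ S)))
    (hkbd : ∃ C, ∀ x ∈ S, ∀ a ∈ Set.Ici (0:ℝ), ∀ y ∈ S, k x a y ≤ C)
    (hknn : ∀ x ∈ S, ∀ a ∈ Set.Ici (0:ℝ), ∀ y ∈ S, 0 ≤ k x a y)
    (p : ℝ) (hp : p ∈ Set.Ioo (0:ℝ) 1)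
    (ε₀ : ℝ) (hε₀ : 0 < ε₀) (I : Set ℝ) (hI : I ⊆ Set.Ici 0)
    (hIint : (interior I).Nonempty)
    (hA4 : ∀ x ∈ S, ∀ y ∈ S, dist y x < ε₀ →
      I ⊆ tsupport (fun a => k x a y) ∩ tsupport (fun a => B x a))
    :
    ∀ lam : ℝ, -Dlow < lam →
      (∀ x ∈ S, IntegrableOn (fun a => B x a * Rfun D lam x a) (Set.Ioi 0) volume) ∧
      (∀ x ∈ S, ∀ y ∈ S,
        IntegrableOn (fun a => B x a * k x a y * Rfun D lam x a) (Set.Ioi 0) volume) ∧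
      ContinuousOn (rfun B D p lam) S ∧
      ContinuousOn (fun q : EuclideanSpace ℝ (Fin d) × EuclideanSpace ℝ (Fin d) =>
        Kfun B D k p lam q.1 q.2) (S ×ˢ S) ∧
      (∀ x ∈ S, 0 < rfun B D p lam x) ∧
      (∀ x ∈ S, ∀ y ∈ S, 0 ≤ Kfun B D k p lam x y) ∧
      (∃ ε₀' > (0:ℝ), ∃ c₀' > (0:ℝ), ∀ x ∈ S, ∀ y ∈ S, dist y x < ε₀' →
        c₀' < Kfun B D k p lam x y) := by
  obtain ⟨CB₀, hCB₀⟩ := hBbd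
  obtain ⟨CD₀, hCD₀⟩ := hDbd
  obtain ⟨Ck₀, hCk₀⟩ := hkbd
  set CB := max CB₀ 0 with hCBdef
  set CD := max CD₀ 0 with hCDdef
  set Ck := max Ck₀ 0 with hCkdef
  have hCBnn : 0 ≤ CB := le_max_right _ _
  have hCknn : 0 ≤ Ck := le_max_right _ _
  have hCB : ∀ x ∈ S, ∀ a ∈ Set.Ici (0:ℝ), B x a ≤ CB :=
    fun x hx a ha => le_max_of_le_left (hCB₀ x hx a ha)
  have hCk : ∀ x ∈ S, ∀ a ∈ Set.Ici (0:ℝ), ∀ y ∈ S, k x a y ≤ Ck :=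
    fun x hx a ha y hy => le_max_of_le_left (hCk₀ x hx a ha y hy)
  have hCD : ∀ x ∈ S, ∀ a ∈ Set.Ici (0:ℝ), ‖D x a‖ ≤ CD := by
    intro x hx a ha
    rw [Real.norm_eq_abs, abs_of_nonneg (le_trans hDlow.le (hDlb x hx a ha))]
    exact le_max_of_le_left (hCD₀ x hx a ha)
  -- slice continuity in a
  have hBx : ∀ x ∈ S, ContinuousOn (fun a => B x a) (Set.Ici 0) := by
    intro x hx
    exact hBcont.comp (f := fun a : ℝ => (x, a))
      ((continuous_const.prodMk continuous_id).continuousOn) (fun a ha => ⟨hx, ha⟩)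
  have hDx : ∀ x ∈ S, ContinuousOn (fun a => D x a) (Set.Ici 0) := by
    intro x hx
    exact hDcont.comp (f := fun a : ℝ => (x, a))
      ((continuous_const.prodMk continuous_id).continuousOn) (fun a ha => ⟨hx, ha⟩)
  have hkx : ∀ x ∈ S, ∀ y ∈ S, ContinuousOn (fun a => k x a y) (Set.Ici 0) := by
    intro x hx y hy
    exact hkcont.comp (f := fun a : ℝ => (x, a, y)) (Continuous.continuousOn (by fun_prop))
      (fun a ha => ⟨hx, ha, hy⟩)
  -- slice continuity in x (within S)
  have hBcw : ∀ a : ℝ, 0 ≤ a → ∀ x₀ ∈ S, ContinuousWithinAt (fun x => B x a) S x₀ := by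
    intro a ha x₀ hx₀
    exact (hBcont (x₀, a) ⟨hx₀, ha⟩).comp (f := fun x => (x, a))
      ((continuous_id.prodMk continuous_const).continuousWithinAt) (fun x hx => ⟨hx, ha⟩)
  have hDcw : ∀ a : ℝ, 0 ≤ a → ∀ x₀ ∈ S, ContinuousWithinAt (fun x => D x a) S x₀ := by
    intro a ha x₀ hx₀
    exact (hDcont (x₀, a) ⟨hx₀, ha⟩).comp (f := fun x => (x, a))
      ((continuous_id.prodMk continuous_const).continuousWithinAt) (fun x hx => ⟨hx, ha⟩)
  -- interval integrability of D slices
  have hDint : ∀ x ∈ S, ∀ a b : ℝ, 0 ≤ a → 0 ≤ b →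
      IntervalIntegrable (fun t => D x t) volume a b := by
    intro x hx a b ha hb
    refine ((hDx x hx).mono ?_).intervalIntegrable
    intro t ht
    rw [Set.mem_uIcc] at ht
    rcases ht with ht | ht
    · exact le_trans ha ht.1
    · exact le_trans hb ht.1
  intro lam hlam
  have hμ : 0 < Dlow + lam := by linarith
  -- lower bound on the inner integral
  have hGlb : ∀ x ∈ S, ∀ a : ℝ, 0 ≤ a → Dlow * a ≤ ∫ α in (0:ℝ)..a, D x α := by
    intro x hx a ha
    have : ∫ α in (0:ℝ)..a, (Dlow : ℝ) ≤ ∫ α in (0:ℝ)..a, D x α :=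
      intervalIntegral.integral_mono_on ha intervalIntegrable_const
        (hDint x hx 0 a le_rfl ha) (fun t ht => hDlb x hx t ht.1)
    simpa [mul_comm] using this
  have hRle : ∀ x ∈ S, ∀ a : ℝ, 0 ≤ a →
      Rfun D lam x a ≤ Real.exp (-(Dlow + lam) * a) := by
    intro x hx a ha
    rw [Rfun, Real.exp_le_exp]
    have := hGlb x hx a ha
    nlinarith
  -- continuity of primitive in a
  have hGconta : ∀ x ∈ S, ContinuousOn (fun a => ∫ α in (0:ℝ)..a, D x α) (Set.Ici 0) := by
    intro x hx
    have key : LipschitzOnWith (Real.toNNReal CD)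
        (fun a => ∫ α in (0:ℝ)..a, D x α) (Set.Ici 0) := by
      rw [lipschitzOnWith_iff_dist_le_mul]
      intro a ha b hb
      have hsplit : (∫ α in (0:ℝ)..a, D x α) - (∫ α in (0:ℝ)..b, D x α)
          = ∫ α in b..a, D x α := by
        rw [← intervalIntegral.integral_add_adjacent_intervals
          (hDint x hx 0 b le_rfl hb) (hDint x hx b a hb ha)]
        ring
      rw [Real.dist_eq, Real.dist_eq, hsplit]
      have hbound : ∀ t ∈ Set.uIoc b a, ‖D x t‖ ≤ CD := by
        intro t ht
        refine hCD x hx t ?_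
        have := ht.1
        rcases le_total b a with h | h
        · rw [Set.uIoc_of_le h] at ht; exact le_of_lt (lt_of_le_of_lt hb ht.1)
        · rw [Set.uIoc_of_ge h] at ht; exact le_of_lt (lt_of_le_of_lt ha ht.1)
      have := intervalIntegral.norm_integral_le_of_norm_le_const hbound
      rw [Real.coe_toNNReal _ (le_max_right _ _)]
      calc |∫ α in b..a, D x α| ≤ CD * |a - b| := this
        _ = CD * |a - b| := rfl
    exact key.continuousOn
  have hRconta : ∀ x ∈ S, ContinuousOn (fun a => Rfun D lam x a) (Set.Ici 0) := by
    intro x hx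
    have : ContinuousOn (fun a => -(∫ α in (0:ℝ)..a, D x α) - lam * a) (Set.Ici 0) :=
      (hGconta x hx).neg.sub (Continuous.continuousOn (by fun_prop))
    exact Real.continuous_exp.comp_continuousOn this
  have hRpos : ∀ x a, 0 < Rfun D lam x a := fun x a => Real.exp_pos _
  -- measurability
  have hmeas_r : ∀ x ∈ S, AEStronglyMeasurable (fun a => B x a * Rfun D lam x a)
      (volume.restrict (Set.Ioi 0)) := by
    intro x hx
    exact (((hBx x hx).mul (hRconta x hx)).mono Set.Ioi_subset_Ici_self).aestronglyMeasurable
      measurableSet_Ioi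
  have hmeas_K : ∀ x ∈ S, ∀ y ∈ S,
      AEStronglyMeasurable (fun a => B x a * k x a y * Rfun D lam x a)
      (volume.restrict (Set.Ioi 0)) := by
    intro x hx y hy
    exact ((((hBx x hx).mul (hkx x hx y hy)).mul (hRconta x hx)).mono
      Set.Ioi_subset_Ici_self).aestronglyMeasurable measurableSet_Ioi
  have hbint : ∀ c : ℝ, Integrable (fun a => c * Real.exp (-(Dlow + lam) * a))
      (volume.restrict (Set.Ioi 0)) := fun c => (exp_neg_integrableOn_Ioi 0 hμ).const_mul c
  -- the two integrabilities
  have hbd_r : ∀ x ∈ S, ∀ a ∈ Set.Ioi (0:ℝ),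
      ‖B x a * Rfun D lam x a‖ ≤ CB * Real.exp (-(Dlow + lam) * a) := by
    intro x hx a ha
    have ha' : (0:ℝ) ≤ a := le_of_lt ha
    rw [Real.norm_eq_abs, abs_of_nonneg (mul_nonneg (hBnn x hx a ha') (hRpos x a).le)]
    exact mul_le_mul (hCB x hx a ha') (hRle x hx a ha') (hRpos x a).le hCBnn
  have hbd_K : ∀ x ∈ S, ∀ y ∈ S, ∀ a ∈ Set.Ioi (0:ℝ),
      ‖B x a * k x a y * Rfun D lam x a‖ ≤ (CB * Ck) * Real.exp (-(Dlow + lam) * a) := by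
    intro x hx y hy a ha
    have ha' : (0:ℝ) ≤ a := le_of_lt ha
    have h1 : 0 ≤ B x a * k x a y := mul_nonneg (hBnn x hx a ha') (hknn x hx a ha' y hy)
    rw [Real.norm_eq_abs, abs_of_nonneg (mul_nonneg h1 (hRpos x a).le)]
    refine mul_le_mul ?_ (hRle x hx a ha') (hRpos x a).le (mul_nonneg hCBnn hCknn)
    exact mul_le_mul (hCB x hx a ha') (hCk x hx a ha' y hy) (hknn x hx a ha' y hy) hCBnn
  have hint1 : ∀ x ∈ S, IntegrableOn (fun a => B x a * Rfun D lam x a) (Set.Ioi 0) volume := by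
    intro x hx
    refine Integrable.mono' (hbint CB) (hmeas_r x hx) ?_
    exact (ae_restrict_iff' measurableSet_Ioi).2 (Filter.Eventually.of_forall (hbd_r x hx))
  have hint2 : ∀ x ∈ S, ∀ y ∈ S, IntegrableOn (fun a => B x a * k x a y * Rfun D lam x a)
      (Set.Ioi 0) volume := by
    intro x hx y hy
    refine Integrable.mono' (hbint (CB * Ck)) (hmeas_K x hx y hy) ?_
    exact (ae_restrict_iff' measurableSet_Ioi).2 (Filter.Eventually.of_forall (hbd_K x hx y hy))
  -- continuity of the primitive in x within S
  have hGcw : ∀ a : ℝ, 0 ≤ a → ∀ x₀ ∈ S,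
      ContinuousWithinAt (fun x => ∫ α in (0:ℝ)..a, D x α) S x₀ := by
    intro a ha x₀ hx₀
    have hsub : Set.uIoc (0:ℝ) a ⊆ Set.Ici 0 := by
      rw [Set.uIoc_of_le ha]
      exact fun t ht => le_of_lt ht.1
    apply intervalIntegral.continuousWithinAt_of_dominated_interval (bound := fun _ => CD)
    · filter_upwards [self_mem_nhdsWithin] with x hx
      exact (((hDx x hx).mono hsub).aestronglyMeasurable measurableSet_uIoc)
    · filter_upwards [self_mem_nhdsWithin] with x hx
      exact Filter.Eventually.of_forall fun t ht => hCD x hx t (hsub ht)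
    · exact intervalIntegrable_const
    · exact Filter.Eventually.of_forall fun t ht => hDcw t (hsub ht) x₀ hx₀
  have hRcw : ∀ a : ℝ, 0 ≤ a → ∀ x₀ ∈ S,
      ContinuousWithinAt (fun x => Rfun D lam x a) S x₀ := by
    intro a ha x₀ hx₀
    have : ContinuousWithinAt (fun x => Real.exp (-(∫ α in (0:ℝ)..a, D x α) - lam * a)) S x₀ :=
      (Real.continuous_exp.continuousAt).comp_continuousWithinAt
        ((hGcw a ha x₀ hx₀).neg.sub continuousWithinAt_const)
    exact this
  -- continuity of rfun
  have hrcont : ContinuousOn (rfun B D p lam) S := by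
    intro x₀ hx₀
    have key : ContinuousWithinAt (fun x => ∫ a in Set.Ioi (0:ℝ), B x a * Rfun D lam x a) S x₀ := by
      apply MeasureTheory.tendsto_integral_filter_of_dominated_convergence
        (bound := fun a => CB * Real.exp (-(Dlow + lam) * a))
      · filter_upwards [self_mem_nhdsWithin] with x hx using hmeas_r x hx
      · filter_upwards [self_mem_nhdsWithin] with x hx
        exact (ae_restrict_iff' measurableSet_Ioi).2 (Filter.Eventually.of_forall (hbd_r x hx))
      · exact hbint CB
      · refine (ae_restrict_iff' measurableSet_Ioi).2 (Filter.Eventually.of_forall fun a ha => ?_)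
        exact (hBcw a (le_of_lt ha) x₀ hx₀).mul (hRcw a (le_of_lt ha) x₀ hx₀)
    have : ContinuousWithinAt
        (fun x => (1 - p) * ∫ a in Set.Ioi (0:ℝ), B x a * Rfun D lam x a) S x₀ :=
      continuousWithinAt_const.mul key
    exact this
  -- continuity of Kfun on S ×ˢ S
  have hKcont : ContinuousOn (fun q : EuclideanSpace ℝ (Fin d) × EuclideanSpace ℝ (Fin d) =>
      Kfun B D k p lam q.1 q.2) (S ×ˢ S) := by
    intro q₀ hq₀
    obtain ⟨hq₁, hq₂⟩ := hq₀
    have key : ContinuousWithinAt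
        (fun q : EuclideanSpace ℝ (Fin d) × EuclideanSpace ℝ (Fin d) =>
          ∫ a in Set.Ioi (0:ℝ), B q.1 a * k q.1 a q.2 * Rfun D lam q.1 a) (S ×ˢ S) q₀ := by
      apply MeasureTheory.tendsto_integral_filter_of_dominated_convergence
        (bound := fun a => (CB * Ck) * Real.exp (-(Dlow + lam) * a))
      · filter_upwards [self_mem_nhdsWithin] with q hq
        exact hmeas_K q.1 hq.1 q.2 hq.2
      · filter_upwards [self_mem_nhdsWithin] with q hq
        exact (ae_restrict_iff' measurableSet_Ioi).2
          (Filter.Eventually.of_forall (hbd_K q.1 hq.1 q.2 hq.2))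
      · exact hbint (CB * Ck)
      · refine (ae_restrict_iff' measurableSet_Ioi).2 (Filter.Eventually.of_forall fun a ha => ?_)
        have ha' : (0:ℝ) ≤ a := le_of_lt ha
        have hBp : ContinuousWithinAt (fun q : EuclideanSpace ℝ (Fin d) × _ => B q.1 a)
            (S ×ˢ S) q₀ :=
          (hBcw a ha' q₀.1 hq₁).comp continuousWithinAt_fst (fun q hq => hq.1)
        have hRp : ContinuousWithinAt
            (fun q : EuclideanSpace ℝ (Fin d) × _ => Rfun D lam q.1 a) (S ×ˢ S) q₀ :=
          (hRcw a ha' q₀.1 hq₁).comp continuousWithinAt_fst (fun q hq => hq.1)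
        have hkp : ContinuousWithinAt
            (fun q : EuclideanSpace ℝ (Fin d) × EuclideanSpace ℝ (Fin d) => k q.1 a q.2)
            (S ×ˢ S) q₀ := by
          exact (hkcont (q₀.1, a, q₀.2) ⟨hq₁, ha', hq₂⟩).comp
            (f := fun q : EuclideanSpace ℝ (Fin d) × EuclideanSpace ℝ (Fin d) => (q.1, a, q.2))
            ((continuous_fst.prodMk (continuous_const.prodMk continuous_snd)).continuousWithinAt)
            (fun q hq => ⟨hq.1, ha', hq.2⟩)
        exact (hBp.mul hkp).mul hRp
    have : ContinuousWithinAt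
        (fun q : EuclideanSpace ℝ (Fin d) × EuclideanSpace ℝ (Fin d) =>
          p * ∫ a in Set.Ioi (0:ℝ), B q.1 a * k q.1 a q.2 * Rfun D lam q.1 a) (S ×ˢ S) q₀ :=
      continuousWithinAt_const.mul key
    exact this
  -- existence of a point where both B and k are positive
  have hEx : ∀ x ∈ S, ∀ y ∈ S, dist y x < ε₀ →
      ∃ a₂, 0 < a₂ ∧ 0 < B x a₂ ∧ 0 < k x a₂ y := by
    intro x hx y hy hxy
    obtain ⟨a₁, ha₁⟩ := hIint
    have hJpos : interior I ⊆ Set.Ioi (0:ℝ) := by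
      intro t ht
      have := interior_mono hI ht
      simpa using this
    have hsupp := hA4 x hx y hy hxy
    have hb : ∃ b ∈ interior I, B x b ≠ 0 := by
      have h1 : a₁ ∈ closure (Function.support fun a => B x a) := (hsupp (interior_subset ha₁)).2
      rw [mem_closure_iff] at h1
      obtain ⟨b, hbJ, hbsupp⟩ := h1 _ isOpen_interior ha₁
      exact ⟨b, hbJ, hbsupp⟩
    obtain ⟨b, hbJ, hbB⟩ := hb
    have hbpos : (0:ℝ) < b := hJpos hbJ
    have hcb : ContinuousAt (fun a => B x a) b := (hBx x hx).continuousAt (Ici_mem_nhds hbpos)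
    have hBposb : 0 < B x b := (hBnn x hx b hbpos.le).lt_of_ne (Ne.symm hbB)
    have hev : ∀ᶠ t in 𝓝 b, 0 < B x t ∧ t ∈ interior I :=
      (hcb.eventually (eventually_gt_nhds hBposb)).and
        (Filter.eventually_mem_set.2 (isOpen_interior.mem_nhds hbJ))
    obtain ⟨U, hUsub, hUopen, hbU⟩ := eventually_nhds_iff.1 hev
    have h2 : b ∈ closure (Function.support fun a => k x a y) := (hsupp (interior_subset hbJ)).1
    rw [mem_closure_iff] at h2
    obtain ⟨a₂, ha₂U, ha₂k⟩ := h2 U hUopen hbU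
    have ha₂pos : (0:ℝ) < a₂ := hJpos (hUsub a₂ ha₂U).2
    exact ⟨a₂, ha₂pos, (hUsub a₂ ha₂U).1,
      (hknn x hx a₂ ha₂pos.le y hy).lt_of_ne (Ne.symm ha₂k)⟩
  -- positivity of rfun
  have hrpos : ∀ x ∈ S, 0 < rfun B D p lam x := by
    intro x hx
    obtain ⟨a₂, ha₂pos, hB₂, _⟩ := hEx x hx x hx (by simpa using hε₀)
    have hpos := posint_aux (fun a => B x a * Rfun D lam x a)
      ((hBx x hx).mul (hRconta x hx))
      (fun a ha => mul_nonneg (hBnn x hx a ha) (hRpos x a).le)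
      (hint1 x hx) ⟨a₂, ha₂pos, (mul_pos hB₂ (hRpos x a₂)).ne'⟩
    have h1p : 0 < 1 - p := by linarith [hp.2]
    exact mul_pos h1p hpos
  -- pointwise positivity of K near the diagonal
  have hKpt : ∀ x ∈ S, ∀ y ∈ S, dist y x < ε₀ → 0 < Kfun B D k p lam x y := by
    intro x hx y hy hxy
    obtain ⟨a₂, ha₂pos, hB₂, hk₂⟩ := hEx x hx y hy hxy
    have hpos := posint_aux (fun a => B x a * k x a y * Rfun D lam x a)
      (((hBx x hx).mul (hkx x hx y hy)).mul (hRconta x hx))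
      (fun a ha => mul_nonneg (mul_nonneg (hBnn x hx a ha) (hknn x hx a ha y hy)) (hRpos x a).le)
      (hint2 x hx y hy) ⟨a₂, ha₂pos, (mul_pos (mul_pos hB₂ hk₂) (hRpos x a₂)).ne'⟩
    exact mul_pos hp.1 hpos
  -- nonnegativity of K
  have hKnn : ∀ x ∈ S, ∀ y ∈ S, 0 ≤ Kfun B D k p lam x y := by
    intro x hx y hy
    refine mul_nonneg hp.1.le (setIntegral_nonneg measurableSet_Ioi fun a ha => ?_)
    exact mul_nonneg (mul_nonneg (hBnn x hx a (le_of_lt (show (0:ℝ) < a from ha))) (hknn x hx a (le_of_lt (show (0:ℝ) < a from ha)) y hy))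
      (hRpos x a).le
  -- uniform lower bound near the diagonal
  have hfinal : ∃ ε₀' > (0:ℝ), ∃ c₀' > (0:ℝ), ∀ x ∈ S, ∀ y ∈ S, dist y x < ε₀' →
      c₀' < Kfun B D k p lam x y := by
    set T : Set (EuclideanSpace ℝ (Fin d) × EuclideanSpace ℝ (Fin d)) :=
      (S ×ˢ S) ∩ {q | dist q.2 q.1 ≤ ε₀ / 2} with hTdef
    have hTcomp : IsCompact T :=
      (hScomp.prod hScomp).inter_right
        (isClosed_le (Continuous.dist continuous_snd continuous_fst) continuous_const)
    obtain ⟨x₀, hx₀Ω⟩ := hΩne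
    have hx₀S : x₀ ∈ S := hSdef ▸ subset_closure hx₀Ω
    have hTne : T.Nonempty := ⟨(x₀, x₀), ⟨⟨hx₀S, hx₀S⟩, by simp; linarith⟩⟩
    obtain ⟨q₀, hq₀T, hq₀min⟩ := hTcomp.exists_isMinOn hTne
      (hKcont.mono Set.inter_subset_left)
    have hq₀pos : 0 < Kfun B D k p lam q₀.1 q₀.2 :=
      hKpt q₀.1 hq₀T.1.1 q₀.2 hq₀T.1.2 (lt_of_le_of_lt hq₀T.2 (by linarith))
    refine ⟨ε₀ / 2, by linarith, Kfun B D k p lam q₀.1 q₀.2 / 2, by linarith, ?_⟩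
    intro x hxS y hyS hdist
    have hmem : (x, y) ∈ T := ⟨⟨hxS, hyS⟩, le_of_lt hdist⟩
    have := hq₀min hmem
    simp only [Set.mem_setOf_eq] at this
    linarith [this]
  exact ⟨hint1, hint2, hrcont, hKcont, hrpos, hKnn, hfinal⟩
end
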